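/- Constant dynamics, base case: suppose the vector fields are constant, i.e., f q = fun _ => a q for a fixed map a : Q → E. Then for every q : Q, every x₀ : E, and every τ ≥ 0: (x₀, τ) ∈ X q 0 if and only if there exists δ ≥ 0 such that τ + δ ∈ Set.Icc l u, φ₂ (x₀ + δ • a q) (τ + δ), and φ₁ (x₀ + h • a q) (τ + h) for all h ∈ Set.Icc 0 δ. (Paper's Corollary 2 specialized to equation (3), using that Ψ(t; x, τ, q) = x + (t − τ)·a_q is the unique solution of ẋ = a_q.) -/

import Mathlib

open Set

noncomputable section

/-- The state space: `EuclideanSpace ℝ (Fin n)`. -/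
abbrev E (n : ℕ) := EuclideanSpace ℝ (Fin n)

/-- A controller from time `τ` with at most `i` switches: a finite sequence
`(q₀,t₀),…,(q_k,t_k)` with `k ≤ i`, `t 0 = τ` and nondecreasing switching times. -/
structure Controller (Q : Type) (τ : ℝ) (i : ℕ) where
  k : ℕ
  hk : k ≤ i
  q : ℕ → Q
  t : ℕ → ℝ
  ht0 : t 0 = τ
  mono : ∀ j, j < k → t j ≤ t (j + 1)

/-- `Sat x τ`: the signal `x` satisfies `φ₁ U_{I ⊖ τ} φ₂` from time `τ`. -/
def Sat {n : ℕ} (φ₁ φ₂ : E n → ℝ → Prop) (l u : ℝ) (x : ℝ → E n) (τ : ℝ) : Prop :=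
  ∃ τ', τ ≤ τ' ∧ τ' - τ ∈ Set.Icc (l - τ) (u - τ) ∩ Set.Ici (0 : ℝ) ∧
    φ₂ (x τ') τ' ∧ ∀ τ'' ∈ Set.Icc τ τ', φ₁ (x τ'') τ''

/-- `x` is a trajectory under the controller `c` from `(x₀, τ)`. -/
def IsTraj {n : ℕ} {Q : Type} (f : Q → E n → E n) {τ : ℝ} {i : ℕ}
    (c : Controller Q τ i) (x₀ : E n) (x : ℝ → E n) : Prop :=
  ContinuousOn x (Set.Ici τ) ∧ x τ = x₀ ∧
    ∀ j ≤ c.k, ∀ s : ℝ, c.t j ≤ s → (j < c.k → s < c.t (j + 1)) →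
      HasDerivWithinAt x (f (c.q j) (x s)) (Set.Ici s) s

/-- The state-time set `X q i`. -/
def X {n : ℕ} {Q : Type} (φ₁ φ₂ : E n → ℝ → Prop) (l u : ℝ) (f : Q → E n → E n)
    (q : Q) (i : ℕ) : Set (E n × ℝ) :=
  {p | 0 ≤ p.2 ∧ ∃ c : Controller Q p.2 i, c.q 0 = q ∧
    ∃ x : ℝ → E n, IsTraj f c p.1 x ∧ Sat φ₁ φ₂ l u x p.2}

/-- A mode-`q` trajectory from `(x₀, τ)` (trajectory under the single-element
controller `(q, τ)`). -/
def IsModeTraj {n : ℕ} {Q : Type} (f : Q → E n → E n) (q : Q) (x₀ : E n) (τ : ℝ)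
    (x : ℝ → E n) : Prop :=
  ContinuousOn x (Set.Ici τ) ∧ x τ = x₀ ∧
    ∀ s : ℝ, τ ≤ s → HasDerivWithinAt x (f q (x s)) (Set.Ici s) s

/-- `Ψ` is a global flow for mode `q`. -/
def IsGlobalFlow {n : ℕ} {Q : Type} (f : Q → E n → E n) (q : Q)
    (Ψ : E n → ℝ → ℝ → E n) : Prop :=
  (∀ x₀ τ, Ψ x₀ τ τ = x₀) ∧
  (∀ (x₀ : E n) (τ t : ℝ), HasDerivAt (fun s => Ψ x₀ τ s) (f q (Ψ x₀ τ t)) t) ∧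
  (∀ (x₀ : E n) (τ : ℝ) (x : ℝ → E n),
      IsModeTraj f q x₀ τ x → Set.EqOn x (Ψ x₀ τ) (Set.Ici τ))

/-- Relaxing the switching bound of a controller. -/
def Controller.relax {Q : Type} {τ : ℝ} {i j : ℕ} (h : i ≤ j)
    (c : Controller Q τ i) : Controller Q τ j :=
  ⟨c.k, c.hk.trans h, c.q, c.t, c.ht0, c.mono⟩

/-- Prepend the pair `(q, τ)` to a controller from time `τ' ≥ τ`. -/
def Controller.prepend {Q : Type} {τ' : ℝ} {i : ℕ} (q : Q) (τ : ℝ) (h : τ ≤ τ')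
    (c : Controller Q τ' i) : Controller Q τ (i + 1) where
  k := c.k + 1
  hk := Nat.succ_le_succ c.hk
  q := fun j => match j with | 0 => q | Nat.succ m => c.q m
  t := fun j => match j with | 0 => τ | Nat.succ m => c.t m
  ht0 := rfl
  mono := by
    intro j hj
    cases j with
    | zero => show τ ≤ c.t 0; rw [c.ht0]; exact h
    | succ m =>
        show c.t m ≤ c.t (m + 1)
        exact c.mono m (Nat.lt_of_succ_lt_succ hj)

/-- Paper's Corollary 2, base case: `X q 0` for constant dynamics `f q = fun _ => a q`. -/
theorem stmt10 {n : ℕ} (φ₁ φ₂ : E n → ℝ → Prop) (l u : ℝ) (hl : 0 ≤ l) (hlu : l ≤ u)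
    (Q : Type) [Fintype Q] (a : Q → E n)
    (q : Q) (x₀ : E n) (τ : ℝ) (hτ : 0 ≤ τ) :
    (x₀, τ) ∈ X φ₁ φ₂ l u (fun q _ => a q) q 0 ↔
      ∃ δ ≥ (0 : ℝ), (τ + δ) ∈ Set.Icc l u ∧ φ₂ (x₀ + δ • a q) (τ + δ) ∧
        ∀ h ∈ Set.Icc (0 : ℝ) δ, φ₁ (x₀ + h • a q) (τ + h) := by
  constructor
  · rintro ⟨-, c, hcq, x, ⟨hcont, hx0, hderiv⟩, τ', hττ', ⟨hmem1, hmem2⟩, hφ2, hφ1⟩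
    have hk0 : c.k = 0 := Nat.le_zero.mp c.hk
    have hD : ∀ s : ℝ, τ ≤ s → HasDerivWithinAt x (a q) (Set.Ici s) s := by
      intro s hs
      have := hderiv 0 (by omega) s (by rw [c.ht0]; exact hs) (by omega)
      rwa [hcq] at this
    have hxformula : ∀ t : ℝ, τ ≤ t → x t = x₀ + (t - τ) • a q := by
      intro t ht
      set g : ℝ → E n := fun s => x s - (s - τ) • a q with hg
      have hgc : ContinuousOn g (Set.Icc τ t) := by
        apply ContinuousOn.sub
        · exact hcont.mono (fun s hs => hs.1)
        · exact (Continuous.smul (continuous_id.sub continuous_const) continuous_const).continuousOn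
      have hgd : ∀ s ∈ Set.Ico τ t, HasDerivWithinAt g 0 (Set.Ici s) s := by
        intro s hs
        have h1 : HasDerivWithinAt (fun s : ℝ => (s - τ) • a q) ((1:ℝ) • a q)
            (Set.Ici s) s :=
          (((hasDerivAt_id s).sub_const τ).smul_const (a q)).hasDerivWithinAt
        have := (hD s hs.1).sub h1
        rw [one_smul, sub_self] at this
        exact this
      have := constant_of_has_deriv_right_zero hgc hgd t
        ⟨ht, le_refl t⟩
      simp only [hg, sub_self, zero_smul, sub_zero, hx0] at this
      rw [← this]; abel
    refine ⟨τ' - τ, hmem2, ?_, ?_, ?_⟩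
    · constructor
      · linarith [hmem1.1]
      · linarith [hmem1.2]
    · have : τ + (τ' - τ) = τ' := by ring
      rw [this, ← hxformula τ' hττ']
      exact hφ2
    · intro h hh
      have := hφ1 (τ + h) ⟨by linarith [hh.1], by linarith [hh.2]⟩
      rwa [hxformula (τ + h) (by linarith [hh.1]), add_sub_cancel_left] at this
  · rintro ⟨δ, hδ, hIcc, hφ2, hφ1⟩
    refine ⟨hτ, ⟨0, le_refl 0, fun _ => q, fun _ => τ, rfl, by omega⟩, rfl,
      fun s => x₀ + (s - τ) • a q, ⟨?_, by simp, ?_⟩, ?_⟩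
    · exact (Continuous.add continuous_const
        (Continuous.smul (continuous_id.sub continuous_const) continuous_const)).continuousOn
    · intro j hj s hs _
      have h1 : HasDerivWithinAt (fun s : ℝ => x₀ + (s - τ) • a q) ((1:ℝ) • a q)
          (Set.Ici s) s := by
        have h0 : HasDerivAt (fun s : ℝ => (s - τ) • a q) ((1:ℝ) • a q) s :=
          ((hasDerivAt_id s).sub_const τ).smul_const (a q)
        exact (h0.const_add x₀).hasDerivWithinAt
      simpa using h1
    · refine ⟨τ + δ, by linarith, ⟨⟨by linarith [hIcc.1], by linarith [hIcc.2]⟩, by simpa⟩, ?_, ?_⟩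
      · simpa using hφ2
      · intro τ'' hτ''
        have := hφ1 (τ'' - τ) ⟨by linarith [hτ''.1], by linarith [hτ''.2]⟩
        simpa using this
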